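/- Let (x̄,ū) be a W^{1,1} local minimizer for (FP3) and let [τ1,τ2] ⊆ [t0,T] with τ1 < τ2 be such that −1 < x̄(t) < 1 for all t ∈ (τ1,τ2). If x̄(τ1) = 1 and x̄(τ2) = −1, then τ2 − τ1 = 2/a and x̄(t) = 1 − a(t − τ1) for all t ∈ [τ1,τ2]. -/

import Mathlib

open MeasureTheory Set
open scoped Classical ENNReal Interval

noncomputable section

/-- A feasible process for problem (FP3): `x` is the (absolutely continuous) state
trajectory, represented as the indefinite integral of its a.e. derivative `-a*u`,
`u` is a measurable control with values in `[-1,1]` a.e., the initial condition is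
`x t0 = x0`, and the bilateral state constraint `-1 ≤ x t ≤ 1` holds on `[t0,T]`. -/
def FP3Feasible (a t0 T x0 : ℝ) (x u : ℝ → ℝ) : Prop :=
  AEStronglyMeasurable u (volume.restrict (Icc t0 T)) ∧
  (∀ᵐ t ∂(volume.restrict (Icc t0 T)), u t ∈ Icc (-1 : ℝ) 1) ∧
  (∀ t ∈ Icc t0 T, x t = x0 + ∫ s in t0..t, -(a * u s)) ∧
  (∀ t ∈ Icc t0 T, x t ∈ Icc (-1 : ℝ) 1)

/-- The cost functional of (FP3) on the interval `[t1,t2]`. -/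
def FP3Cost (lam t1 t2 : ℝ) (x u : ℝ → ℝ) : ℝ :=
  ∫ t in t1..t2, -(Real.exp (-(lam * t)) * (x t + u t))

/-- `(x,u)` is a `W^{1,1}` local minimizer of (FP3). -/
def FP3LocalMin (a lam t0 T x0 : ℝ) (x u : ℝ → ℝ) : Prop :=
  FP3Feasible a t0 T x0 x u ∧
  ∃ δ > (0 : ℝ), ∀ y v, FP3Feasible a t0 T x0 y v →
    (∫ t in t0..T, |(-(a * v t)) - (-(a * u t))|) ≤ δ →
    FP3Cost lam t0 T x u ≤ FP3Cost lam t0 T y v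

/-- `(x,u)` is a `W^{1,1}` global minimizer of (FP3). -/
def FP3GlobalMin (a lam t0 T x0 : ℝ) (x u : ℝ → ℝ) : Prop :=
  FP3Feasible a t0 T x0 x u ∧
  ∀ y v, FP3Feasible a t0 T x0 y v → FP3Cost lam t0 T x u ≤ FP3Cost lam t0 T y v

/-- The function `Δ(t1,t2) = e^{-λ t1} - 2 e^{-λ (t1+t2)/2} + e^{-λ t2}`. -/
def FP3Delta (lam t1 t2 : ℝ) : ℝ :=
  Real.exp (-(lam * t1)) - 2 * Real.exp (-(lam * (t1 + t2) / 2)) + Real.exp (-(lam * t2))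

/-- The characteristic constant `ρ = (1/λ) ln (a/(a-λ))` of (FP3). -/
def FP3rho (a lam : ℝ) : ℝ := (1 / lam) * Real.log (a / (a - lam))

lemma aux_exp_int (lam p q : ℝ) (hlam : lam ≠ 0) :
    ∫ t in p..q, Real.exp (-(lam * t))
      = (Real.exp (-(lam * p)) - Real.exp (-(lam * q))) / lam := by
  have h1 : (fun t : ℝ => Real.exp (-(lam * t))) = fun t => Real.exp ((-lam) * t) := by
    funext t; ring_nf
  rw [h1, intervalIntegral.integral_comp_mul_left Real.exp (neg_ne_zero.mpr hlam), integral_exp]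
  have e1 : -lam * p = -(lam * p) := by ring
  have e2 : -lam * q = -(lam * q) := by ring
  rw [e1, e2, smul_eq_mul]
  field_simp
  ring_nf

lemma aux_ii' {f : ℝ → ℝ} {p q C : ℝ}
    (hm : AEStronglyMeasurable f (volume.restrict (Set.uIoc p q)))
    (hb : ∀ᵐ t ∂(volume.restrict (Set.uIoc p q)), |f t| ≤ C) :
    IntervalIntegrable f volume p q := by
  refine (intervalIntegrable_const (c := C)).mono_fun hm ?_
  filter_upwards [hb] with t ht
  simpa [Real.norm_eq_abs] using ht.trans (le_abs_self C)

lemma aux_ii {f : ℝ → ℝ} {p q C : ℝ}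
    (hm : AEStronglyMeasurable f (volume.restrict (Set.uIoc p q)))
    (hb : ∀ t, |f t| ≤ C) : IntervalIntegrable f volume p q :=
  aux_ii' hm (by filter_upwards with t using hb t)

lemma aux_vol_Iic (A : Set ℝ) (t : ℝ) : volume (A ∩ Iic t) = volume (A ∩ Iio t) := by
  apply le_antisymm
  · have h : A ∩ Iic t ⊆ (A ∩ Iio t) ∪ {t} := by
      rintro x ⟨hxA, hx⟩
      rcases (mem_Iic.mp hx).lt_or_eq with h' | h'
      · exact Or.inl ⟨hxA, h'⟩
      · exact Or.inr (by simp [h'])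
    calc volume (A ∩ Iic t) ≤ volume ((A ∩ Iio t) ∪ {t}) := measure_mono h
      _ ≤ volume (A ∩ Iio t) + volume ({t} : Set ℝ) := measure_union_le _ _
      _ = volume (A ∩ Iio t) := by simp
  · exact measure_mono (inter_subset_inter_right _ Iio_subset_Iic_self)

lemma aux_shrink {A : Set ℝ} {p q : ℝ} (hpq : p < q) (hA : A ⊆ Ioo p q)
    (h : volume A ≠ 0) : ∃ r, p < r ∧ r < q ∧ volume (A ∩ Ioi r) ≠ 0 := by
  by_contra h'
  push_neg at h'
  apply h
  have hsub : A ⊆ ⋃ n : ℕ, A ∩ Ioi (p + (q - p) / (n + 2)) := by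
    intro t ht
    obtain ⟨htp, htq⟩ := hA ht
    obtain ⟨n, hn⟩ := exists_nat_gt ((q - p) / (t - p))
    refine mem_iUnion.mpr ⟨n, ht, ?_⟩
    have htp' : 0 < t - p := by linarith
    have hqp : 0 < q - p := by linarith
    have h1 : (q - p) / (t - p) < n + 2 := by
      have : (0:ℝ) ≤ n := Nat.cast_nonneg n
      linarith
    have h2 : q - p < (t - p) * (n + 2) := by
      rw [div_lt_iff₀ htp'] at h1
      linarith
    have hn2 : (0:ℝ) < (n:ℝ) + 2 := by positivity
    have h3 : (q - p) / (n + 2) < t - p := by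
      rw [div_lt_iff₀ hn2]
      linarith [h2]
    simp only [mem_Ioi]
    linarith
  refine measure_mono_null hsub (measure_iUnion_null fun n => h' _ ?_ ?_)
  · have hqp : 0 < q - p := by linarith
    have : (0:ℝ) < (q - p) / (n + 2) := by positivity
    linarith
  · have hqp : 0 < q - p := by linarith
    have hn2 : (2:ℝ) ≤ (n:ℝ) + 2 := by
      have : (0:ℝ) ≤ n := Nat.cast_nonneg n; linarith
    have : (q - p) / (n + 2) ≤ (q - p) / 2 :=
      div_le_div_of_nonneg_left hqp.le (by norm_num) hn2
    linarith

lemma aux_key (lam τ1 τ2 : ℝ) (hlam : 0 < lam) (h12 : τ1 < τ2)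
    (F : Set ℝ) (hFm : MeasurableSet F) (hFs : F ⊆ Ioo τ1 τ2) :
    ∫ t in τ1..τ2, Real.exp (-(lam * t)) * (volume (F ∩ Iio t)).toReal
      = ∫ s in F, (Real.exp (-(lam * s)) - Real.exp (-(lam * τ2))) / lam := by
  set μ1 := volume.restrict (Ioo τ1 τ2) with hμ1
  haveI : IsFiniteMeasure μ1 := ⟨by
    rw [hμ1, Measure.restrict_apply_univ, Real.volume_Ioo]; exact ENNReal.ofReal_lt_top⟩
  set f : ℝ → ℝ → ℝ := fun t s =>
    if s ∈ F then (if s < t then Real.exp (-(lam * t)) else 0) else 0 with hf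
  have hfmeas : Measurable (Function.uncurry f) := by
    apply Measurable.ite (hFm.preimage measurable_snd)
    · apply Measurable.ite (measurableSet_lt measurable_snd measurable_fst)
      · exact Real.measurable_exp.comp ((measurable_const.mul measurable_fst).neg)
      · exact measurable_const
    · exact measurable_const
  have hfint : Integrable (Function.uncurry f) (μ1.prod μ1) := by
    refine (integrable_const (Real.exp (-(lam * τ1)))).mono' hfmeas.aestronglyMeasurable ?_
    rw [hμ1, Measure.prod_restrict]
    filter_upwards [ae_restrict_mem (measurableSet_Ioo.prod measurableSet_Ioo)] with p hp
    obtain ⟨hp1, _⟩ := hp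
    have hexp : Real.exp (-(lam * p.1)) ≤ Real.exp (-(lam * τ1)) := by
      apply Real.exp_le_exp.mpr
      nlinarith [hp1.1]
    simp only [Function.uncurry, hf, Real.norm_eq_abs]
    split_ifs
    · rwa [abs_of_nonneg (Real.exp_nonneg _)]
    · simpa using Real.exp_nonneg _
    · simpa using Real.exp_nonneg _
  have hswap := integral_integral_swap hfint
  have hL : ∀ t, (∫ s, f t s ∂μ1) = Real.exp (-(lam * t)) * (volume (F ∩ Iio t)).toReal := by
    intro t
    have heq : (fun s => f t s) = (F ∩ Iio t).indicator (fun _ => Real.exp (-(lam * t))) := by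
      funext s
      simp only [hf, indicator, mem_inter_iff, mem_Iio]
      by_cases h1 : s ∈ F <;> by_cases h2 : s < t <;> simp [h1, h2]
    have hset : (F ∩ Iio t) ∩ Ioo τ1 τ2 = F ∩ Iio t :=
      inter_eq_left.mpr ((inter_subset_left).trans hFs)
    rw [heq, integral_indicator_const _ (hFm.inter measurableSet_Iio), hμ1,
      measureReal_restrict_apply (hFm.inter measurableSet_Iio), hset, measureReal_def, smul_eq_mul, mul_comm]
  have hR : ∀ s, (∫ t, f t s ∂μ1)
      = F.indicator (fun s' => (Real.exp (-(lam * s')) - Real.exp (-(lam * τ2))) / lam) s := by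
    intro s
    by_cases hs : s ∈ F
    · have hsτ := hFs hs
      have heq : (fun t => f t s) = (Ioi s).indicator (fun t => Real.exp (-(lam * t))) := by
        funext t
        simp only [hf, indicator, mem_Ioi, hs, if_true]
      rw [heq, integral_indicator measurableSet_Ioi, hμ1,
        Measure.restrict_restrict measurableSet_Ioi]
      have hset : Ioi s ∩ Ioo τ1 τ2 = Ioo s τ2 := by
        ext t
        simp only [mem_inter_iff, mem_Ioi, mem_Ioo]
        constructor
        · rintro ⟨ht1, _, ht3⟩; exact ⟨ht1, ht3⟩
        · rintro ⟨ht1, ht3⟩; exact ⟨ht1, hsτ.1.trans ht1, ht3⟩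
      rw [hset, ← integral_Ioc_eq_integral_Ioo, ← intervalIntegral.integral_of_le hsτ.2.le,
        aux_exp_int lam s τ2 (ne_of_gt hlam), indicator_of_mem hs]
    · have heq : (fun t => f t s) = fun _ => (0:ℝ) := by
        funext t; simp [hf, hs]
      rw [heq, integral_zero, indicator_of_notMem hs]
  have hμF : μ1.restrict F = volume.restrict F := by
    rw [hμ1, Measure.restrict_restrict hFm, inter_eq_left.mpr hFs]
  calc ∫ t in τ1..τ2, Real.exp (-(lam * t)) * (volume (F ∩ Iio t)).toReal
      = ∫ t, Real.exp (-(lam * t)) * (volume (F ∩ Iio t)).toReal ∂μ1 := by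
        rw [hμ1, intervalIntegral.integral_of_le h12.le, integral_Ioc_eq_integral_Ioo]
    _ = ∫ t, (∫ s, f t s ∂μ1) ∂μ1 := by
        apply integral_congr_ae
        filter_upwards with t
        rw [hL t]
    _ = ∫ s, (∫ t, f t s ∂μ1) ∂μ1 := hswap
    _ = ∫ s, F.indicator (fun s' => (Real.exp (-(lam * s')) - Real.exp (-(lam * τ2))) / lam) s ∂μ1 := by
        apply integral_congr_ae
        filter_upwards with s
        rw [hR s]
    _ = ∫ s in F, (Real.exp (-(lam * s)) - Real.exp (-(lam * τ2))) / lam ∂μ1 :=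
        integral_indicator hFm
    _ = ∫ s in F, (Real.exp (-(lam * s)) - Real.exp (-(lam * τ2))) / lam := by
        rw [hμF]

lemma aux_ind_int (c : ℝ) (A s : Set ℝ) (hA : MeasurableSet A) :
    ∫ x in s, c * A.indicator (fun _ => (1:ℝ)) x = c * (volume (A ∩ s)).toReal := by
  have h : (fun x => c * A.indicator (fun _ => (1:ℝ)) x) = A.indicator (fun _ => c) := by
    funext x; by_cases hx : x ∈ A <;> simp [hx]
  rw [h, setIntegral_indicator hA, setIntegral_const, smul_eq_mul, inter_comm, mul_comm, measureReal_def]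

lemma aux_ind_integrable (c : ℝ) (A : Set ℝ) (hA : MeasurableSet A) (hfin : volume A ≠ ⊤)
    (s : Set ℝ) : IntegrableOn (fun x => c * A.indicator (fun _ => (1:ℝ)) x) s := by
  have h : (fun x => c * A.indicator (fun _ => (1:ℝ)) x) = A.indicator (fun _ => c) := by
    funext x; by_cases hx : x ∈ A <;> simp [hx]
  rw [h]
  exact ((integrable_indicator_iff hA).mpr
    (integrableOn_const hfin)).integrableOn

set_option maxHeartbeats 4000000 in
/-- If a local minimizer's trajectory stays in `(-1,1)` on `(τ1,τ2)`
and goes from `1` at `τ1` to `-1` at `τ2`, then `τ2 - τ1 = 2/a` and the trajectory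
is the line `1 - a (t - τ1)` on `[τ1,τ2]`. -/
theorem fp3_statement_S2
    (a lam t0 T x0 : ℝ) (hal : lam < a) (hlam : 0 < lam)
    (ht0 : 0 ≤ t0) (htT : t0 < T) (hx0 : x0 ∈ Icc (-1 : ℝ) 1)
    (xb ub : ℝ → ℝ) (hmin : FP3LocalMin a lam t0 T x0 xb ub)
    (τ1 τ2 : ℝ) (h1 : t0 ≤ τ1) (h12 : τ1 < τ2) (h2 : τ2 ≤ T)
    (hin : ∀ t ∈ Ioo τ1 τ2, xb t ∈ Ioo (-1 : ℝ) 1)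
    (ha1 : xb τ1 = 1) (ha2 : xb τ2 = -1) :
    τ2 - τ1 = 2 / a ∧ ∀ t ∈ Icc τ1 τ2, xb t = 1 - a * (t - τ1) := by
  obtain ⟨⟨humeas, hubd, hxeq, hxbd⟩, δ, hδ, hopt⟩ := hmin
  have ha : 0 < a := hlam.trans hal
  -- measurable representative U of ub with values in [-1,1]
  obtain ⟨U, hUm, hU1, hUae⟩ : ∃ U : ℝ → ℝ, Measurable U ∧ (∀ t, U t ∈ Icc (-1:ℝ) 1) ∧
      U =ᵐ[volume.restrict (Icc t0 T)] ub := by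
    refine ⟨fun t => max (-1) (min 1 (humeas.mk ub t)), ?_, ?_, ?_⟩
    · exact measurable_const.max (measurable_const.min humeas.measurable_mk)
    · intro t
      exact ⟨le_max_left _ _, max_le (by norm_num) (min_le_left _ _)⟩
    · filter_upwards [humeas.ae_eq_mk, hubd] with t ht1 ht2
      rw [← ht1, min_eq_right ht2.2, max_eq_right ht2.1]
  have hUb : ∀ t, |U t| ≤ 1 := fun t => abs_le.mpr ⟨(hU1 t).1, (hU1 t).2⟩
  have hsubI : ∀ p q : ℝ, p ∈ Icc t0 T → q ∈ Icc t0 T → Ι p q ⊆ Icc t0 T := by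
    intro p q hp hq
    exact uIoc_subset_uIcc.trans (uIcc_subset_Icc hp hq)
  have hUaeI : ∀ p q : ℝ, p ∈ Icc t0 T → q ∈ Icc t0 T →
      U =ᵐ[volume.restrict (Ι p q)] ub :=
    fun p q hp hq => ae_restrict_of_ae_restrict_of_subset (hsubI p q hp hq) hUae
  have hUaeI' : ∀ p q : ℝ, p ∈ Icc t0 T → q ∈ Icc t0 T →
      ∀ᵐ t ∂(volume : Measure ℝ), t ∈ Ι p q → U t = ub t := by
    intro p q hp hq
    exact (ae_restrict_iff' measurableSet_uIoc).mp (hUaeI p q hp hq)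
  have hUint : ∀ p q : ℝ, IntervalIntegrable U volume p q :=
    fun p q => aux_ii (hUm.aestronglyMeasurable.restrict) hUb
  have hubint : ∀ p q : ℝ, p ∈ Icc t0 T → q ∈ Icc t0 T →
      IntervalIntegrable ub volume p q := by
    intro p q hp hq
    refine aux_ii' (humeas.mono_measure (Measure.restrict_mono (hsubI p q hp hq) le_rfl)) (C := 1) ?_
    filter_upwards [ae_restrict_of_ae_restrict_of_subset (hsubI p q hp hq) hubd] with t ht
    exact abs_le.mpr ⟨ht.1, ht.2⟩
  have hfint' : ∀ p q : ℝ, p ∈ Icc t0 T → q ∈ Icc t0 T →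
      IntervalIntegrable (fun s => -(a * ub s)) volume p q :=
    fun p q hp hq => ((hubint p q hp hq).const_mul a).neg
  have ht0m : t0 ∈ Icc t0 T := ⟨le_refl t0, htT.le⟩
  have hτ1m : τ1 ∈ Icc t0 T := ⟨h1, h12.le.trans h2⟩
  have hτ2m : τ2 ∈ Icc t0 T := ⟨h1.trans h12.le, h2⟩
  have hinc : ∀ p, p ∈ Icc t0 T → ∀ q, q ∈ Icc t0 T →
      xb q - xb p = -(a * ∫ s in p..q, U s) := by
    intro p hp q hq
    rw [hxeq p hp, hxeq q hq]
    have hA : (x0 + ∫ s in t0..q, -(a * ub s)) - (x0 + ∫ s in t0..p, -(a * ub s))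
        = ∫ s in p..q, -(a * ub s) := by
      rw [add_sub_add_left_eq_sub]
      exact intervalIntegral.integral_interval_sub_left (hfint' t0 q ht0m hq)
        (hfint' t0 p ht0m hp)
    rw [hA]
    have hB : ∫ s in p..q, -(a * ub s) = ∫ s in p..q, -(a * U s) := by
      apply intervalIntegral.integral_congr_ae
      filter_upwards [hUaeI' p q hp hq] with s hs hmem
      rw [hs hmem]
    rw [hB, intervalIntegral.integral_neg, intervalIntegral.integral_const_mul]
  have hlip : ∀ p, p ∈ Icc t0 T → ∀ q, q ∈ Icc t0 T → |xb q - xb p| ≤ a * |q - p| := by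
    intro p hp q hq
    rw [hinc p hp q hq, abs_neg, abs_mul, abs_of_nonneg ha.le]
    have hn := intervalIntegral.norm_integral_le_of_norm_le_const (f := U) (C := 1)
      (a := p) (b := q) (fun x _ => by rw [Real.norm_eq_abs]; exact hUb x)
    rw [Real.norm_eq_abs] at hn
    calc a * |∫ s in p..q, U s| ≤ a * (1 * |q - p|) :=
          mul_le_mul_of_nonneg_left hn ha.le
      _ = a * |q - p| := by ring
  have hcont : ContinuousOn xb (Icc t0 T) := by
    apply LipschitzOnWith.continuousOn (K := Real.toNNReal a)
    apply LipschitzOnWith.of_dist_le_mul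
    intro p hp q hq
    rw [Real.dist_eq, Real.dist_eq, Real.coe_toNNReal a ha.le]
    exact hlip q hq p hp
  -- the main a.e. claim
  have hU1ae : volume ({t | U t < 1} ∩ Ioo τ1 τ2) = 0 := by
    by_contra hcon
    set E := {t | U t < 1} ∩ Ioo τ1 τ2 with hE
    have hEsub : E ⊆ Ioo τ1 τ2 := inter_subset_right
    obtain ⟨sm, hsm1, hsm2, hsmE⟩ := aux_shrink h12 hEsub hcon
    -- a quantitative bad set G on the right of sm
    have hGex : ∃ k : ℕ, volume ({t | U t ≤ 1 - 1/(k+1)} ∩ (E ∩ Ioi sm)) ≠ 0 := by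
      by_contra h'
      push_neg at h'
      apply hsmE
      have hsub : E ∩ Ioi sm ⊆ ⋃ k : ℕ, {t | U t ≤ 1 - 1/(k+1)} ∩ (E ∩ Ioi sm) := by
        rintro t ⟨htE, hts⟩
        have h1t : U t < 1 := htE.1
        obtain ⟨k, hk⟩ := exists_nat_one_div_lt (by linarith : (0:ℝ) < 1 - U t)
        refine mem_iUnion.mpr ⟨k, ?_, htE, hts⟩
        simp only [mem_setOf_eq]
        push_cast
        linarith
      exact measure_mono_null hsub (measure_iUnion_null fun k => h' k)
    obtain ⟨k, hGne⟩ := hGex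
    set ε2 : ℝ := 1/(k+1) with hε2
    have hε2pos : 0 < ε2 := by positivity
    set G := {t | U t ≤ 1 - ε2} ∩ Ioo sm τ2 with hG
    have hGm : MeasurableSet G := (hUm measurableSet_Iic).inter measurableSet_Ioo
    have hGsub : G ⊆ Ioo sm τ2 := inter_subset_right
    have hGpos : volume G ≠ 0 := by
      intro h0
      apply hGne
      refine measure_mono_null ?_ h0
      rintro t ⟨h1t, htE, hts⟩
      exact ⟨h1t, hts, (hEsub htE).2⟩
    -- the set F on the left of sm where U > 0
    have hxsm : xb sm ∈ Ioo (-1:ℝ) 1 := hin sm ⟨hsm1, hsm2⟩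
    have hsmm : sm ∈ Icc t0 T := ⟨h1.trans hsm1.le, hsm2.le.trans h2⟩
    have hIsm : 0 < ∫ s in τ1..sm, U s := by
      have hiA := hinc τ1 hτ1m sm hsmm
      rw [ha1] at hiA
      by_contra hI
      push_neg at hI
      nlinarith [hxsm.2]
    have hA'pos : volume ({t | 0 < U t} ∩ Ioo τ1 sm) ≠ 0 := by
      intro h0
      have hae : ∀ᵐ t ∂(volume.restrict (Ioo τ1 sm)), U t ≤ 0 := by
        rw [ae_restrict_iff' measurableSet_Ioo]
        apply ae_iff.mpr
        refine measure_mono_null ?_ h0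
        intro t ht
        simp only [mem_setOf_eq] at ht
        push_neg at ht
        exact ⟨ht.2, ht.1⟩
      have hle : ∫ s in τ1..sm, U s ≤ 0 := by
        rw [intervalIntegral.integral_of_le hsm1.le, integral_Ioc_eq_integral_Ioo]
        exact integral_nonpos_of_ae hae
      linarith
    obtain ⟨s1, hs11, hs12, hFne⟩ := aux_shrink hsm1 (inter_subset_right) hA'pos
    set F := ({t | 0 < U t} ∩ Ioo τ1 sm) ∩ Ioi s1 with hF
    have hFm' : MeasurableSet F :=
      ((hUm measurableSet_Ioi).inter measurableSet_Ioo).inter measurableSet_Ioi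
    have hFsub : F ⊆ Ioo s1 sm := by
      rintro t ⟨⟨_, _, h2t⟩, h3t⟩
      exact ⟨h3t, h2t⟩
    have hFU : F ⊆ {t | 0 < U t} := fun t ht => ht.1.1
    have hFpos : volume F ≠ 0 := hFne
    -- basic interval positions
    have hτ1s1 : τ1 < s1 := hs11
    have hs1sm : s1 < sm := hs12
    have hFsub2 : F ⊆ Ioo τ1 τ2 := fun t ht =>
      ⟨hτ1s1.trans (hFsub ht).1, (hFsub ht).2.trans hsm2⟩
    have hGsub2 : G ⊆ Ioo τ1 τ2 := fun t ht =>
      ⟨hsm1.trans (hGsub ht).1, (hGsub ht).2⟩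
    have hFfin : volume F ≠ ⊤ := by
      refine ne_top_of_le_ne_top ?_ (measure_mono hFsub)
      rw [Real.volume_Ioo]
      exact ENNReal.ofReal_ne_top
    have hGfin : volume G ≠ ⊤ := by
      refine ne_top_of_le_ne_top ?_ (measure_mono hGsub)
      rw [Real.volume_Ioo]
      exact ENNReal.ofReal_ne_top
    set MF := (volume F).toReal with hMF
    set MG := (volume G).toReal with hMG
    have hMFpos : 0 < MF := ENNReal.toReal_pos hFpos hFfin
    have hMGpos : 0 < MG := ENNReal.toReal_pos hGpos hGfin
    -- the margin η
    have hs1m : s1 ∈ Icc t0 T := ⟨h1.trans hτ1s1.le, ((hs1sm.trans hsm2).le.trans h2)⟩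
    have hIccsub' : Icc s1 τ2 ⊆ Icc t0 T := fun t ht =>
      ⟨hs1m.1.trans ht.1, ht.2.trans h2⟩
    obtain ⟨tst, htst, htstmin⟩ := (isCompact_Icc (a := s1) (b := τ2)).exists_isMinOn
      ⟨s1, le_refl s1, (hs1sm.trans hsm2).le⟩
      ((continuousOn_const (c := (1:ℝ))).sub (hcont.mono hIccsub'))
    set η := 1 - xb tst with hη
    have hηpos : 0 < η := by
      rcases lt_or_eq_of_le htst.2 with hc | hc
      · have := (hin tst ⟨hτ1s1.trans_le htst.1, hc⟩).2
        simp only [hη]; linarith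
      · simp only [hη, hc, ha2]; norm_num
    have hηle : ∀ t ∈ Icc s1 τ2, η ≤ 1 - xb t := by
      intro t ht
      have := isMinOn_iff.mp htstmin t ht
      simp only [Pi.sub_apply] at this
      simp only [hη]; linarith
    -- choice of α and β
    set α := min (min 1 (δ/(2*a*MF))) (min (ε2*MG/MF) (η/(a*MF))) with hα
    have hαpos : 0 < α := by
      apply lt_min (lt_min one_pos (by positivity)) (lt_min (by positivity) (by positivity))
    set β := α * MF / MG with hβ
    have hβpos : 0 < β := by positivity
    have hbal : β * MG = α * MF := by
      rw [hβ, div_mul_cancel₀ _ hMGpos.ne']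
    have hαle1 : α ≤ 1 := (min_le_left _ _).trans (min_le_left _ _)
    have hβε2 : β ≤ ε2 := by
      have hh : α ≤ ε2*MG/MF := (min_le_right _ _).trans (min_le_left _ _)
      rw [hβ, div_le_iff₀ hMGpos]
      calc α * MF ≤ (ε2*MG/MF) * MF := by nlinarith
        _ = ε2 * MG := by field_simp
    have hηb : a*α*MF ≤ η := by
      have hh : α ≤ η/(a*MF) := (min_le_right _ _).trans (min_le_right _ _)
      rw [le_div_iff₀ (by positivity : (0:ℝ) < a*MF)] at hh
      nlinarith
    have hδb : 2*a*α*MF ≤ δ := by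
      have hh : α ≤ δ/(2*a*MF) := (min_le_left _ _).trans (min_le_right _ _)
      rw [le_div_iff₀ (by positivity : (0:ℝ) < 2*a*MF)] at hh
      nlinarith
    -- the perturbation
    set g : ℝ → ℝ := fun t =>
      β * G.indicator (fun _ => (1:ℝ)) t - α * F.indicator (fun _ => (1:ℝ)) t with hg
    set v : ℝ → ℝ := fun t => U t + g t with hv
    set y : ℝ → ℝ := fun t => x0 + ∫ s in t0..t, -(a * v s) with hy
    have hgm : Measurable g :=
      (measurable_const.mul (measurable_one.indicator hGm)).sub
        (measurable_const.mul (measurable_one.indicator hFm'))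
    have hFGdisj : ∀ t, t ∈ F → t ∉ G := by
      intro t htF htG
      exact absurd ((hGsub htG).1) (not_lt.mpr (hFsub htF).2.le)
    have hgF : ∀ t ∈ F, g t = -α := by
      intro t htF
      simp only [hg, indicator_of_mem htF, indicator_of_notMem (hFGdisj t htF)]
      ring
    have hgG : ∀ t ∈ G, g t = β := by
      intro t htG
      have : t ∉ F := fun htF => hFGdisj t htF htG
      simp only [hg, indicator_of_mem htG, indicator_of_notMem this]
      ring
    have hg0 : ∀ t, t ∉ F → t ∉ G → g t = 0 := by
      intro t h1' h2'
      simp only [hg, indicator_of_notMem h1', indicator_of_notMem h2']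
      ring
    have hgabs : ∀ t, |g t| ≤ α * F.indicator (fun _ => (1:ℝ)) t
        + β * G.indicator (fun _ => (1:ℝ)) t := by
      intro t
      by_cases h1' : t ∈ F
      · rw [hgF t h1', indicator_of_mem h1', abs_neg, abs_of_nonneg hαpos.le,
          indicator_of_notMem (hFGdisj t h1')]
        nlinarith
      · by_cases h2' : t ∈ G
        · rw [hgG t h2', indicator_of_notMem h1', indicator_of_mem h2',
            abs_of_nonneg hβpos.le]
          nlinarith
        · rw [hg0 t h1' h2', indicator_of_notMem h1', indicator_of_notMem h2']
          simp
    have hvmem : ∀ t, v t ∈ Icc (-1:ℝ) 1 := by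
      intro t
      simp only [hv]
      by_cases h1' : t ∈ F
      · rw [hgF t h1']
        have hU0 : 0 < U t := hFU h1'
        exact ⟨by linarith, by linarith [(hU1 t).2]⟩
      · by_cases h2' : t ∈ G
        · rw [hgG t h2']
          have hUε : U t ≤ 1 - ε2 := h2'.1
          exact ⟨by linarith [(hU1 t).1], by linarith [hβε2]⟩
        · rw [hg0 t h1' h2']
          simpa using hU1 t
    have hvm : Measurable v := hUm.add hgm
    have hvb : ∀ t, |v t| ≤ 1 := fun t => abs_le.mpr ⟨(hvmem t).1, (hvmem t).2⟩
    have hvint : ∀ p q : ℝ, IntervalIntegrable v volume p q :=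
      fun p q => aux_ii (hvm.aestronglyMeasurable.restrict) hvb
    have hgabs' : ∀ t, |g t| ≤ α + β := by
      intro t
      by_cases h1' : t ∈ F
      · rw [hgF t h1', abs_neg, abs_of_nonneg hαpos.le]
        linarith [hβpos.le]
      · by_cases h2' : t ∈ G
        · rw [hgG t h2', abs_of_nonneg hβpos.le]
          linarith [hαpos.le]
        · rw [hg0 t h1' h2']
          simp only [abs_zero]
          linarith [hαpos.le, hβpos.le]
    have hgint : ∀ p q : ℝ, IntervalIntegrable g volume p q :=
      fun p q => aux_ii (hgm.aestronglyMeasurable.restrict) hgabs'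
    -- the primitive functions
    set mF : ℝ → ℝ := fun t => (volume (F ∩ Iio t)).toReal with hmF
    set mG : ℝ → ℝ := fun t => (volume (G ∩ Iio t)).toReal with hmG
    set w : ℝ → ℝ := fun t => a*α*mF t - a*β*mG t with hw
    have hcutfin : ∀ (A : Set ℝ), volume A ≠ ⊤ → ∀ t : ℝ, volume (A ∩ Iio t) ≠ ⊤ :=
      fun A hA t => ne_top_of_le_ne_top hA (measure_mono inter_subset_left)
    have hmF_le : ∀ t, mF t ≤ MF := by
      intro t
      exact ENNReal.toReal_mono hFfin (measure_mono inter_subset_left)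
    have hmG_le : ∀ t, mG t ≤ MG := by
      intro t
      exact ENNReal.toReal_mono hGfin (measure_mono inter_subset_left)
    have hmF_nonneg : ∀ t, 0 ≤ mF t := fun t => ENNReal.toReal_nonneg
    have hmG_nonneg : ∀ t, 0 ≤ mG t := fun t => ENNReal.toReal_nonneg
    have hmF_zero : ∀ t, t ≤ s1 → mF t = 0 := by
      intro t ht
      have : F ∩ Iio t = ∅ := by
        apply eq_empty_of_forall_notMem
        rintro x ⟨hxF, hx⟩
        exact absurd ((hFsub hxF).1) (not_lt.mpr ((le_of_lt hx).trans ht))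
      simp [hmF, this]
    have hmG_zero : ∀ t, t ≤ sm → mG t = 0 := by
      intro t ht
      have : G ∩ Iio t = ∅ := by
        apply eq_empty_of_forall_notMem
        rintro x ⟨hxG, hx⟩
        exact absurd ((hGsub hxG).1) (not_lt.mpr ((le_of_lt hx).trans ht))
      simp [hmG, this]
    have hmF_full : ∀ t, sm ≤ t → mF t = MF := by
      intro t ht
      have : F ∩ Iio t = F := inter_eq_left.mpr
        (fun x hx => lt_of_lt_of_le (hFsub hx).2 ht)
      rw [hmF]; simp only; rw [this]
    have hmG_full : ∀ t, τ2 ≤ t → mG t = MG := by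
      intro t ht
      have : G ∩ Iio t = G := inter_eq_left.mpr
        (fun x hx => lt_of_lt_of_le (hGsub hx).2 ht)
      rw [hmG]; simp only; rw [this]
    have hmF_meas : Measurable mF := by
      apply Monotone.measurable
      intro p q hpq
      exact ENNReal.toReal_mono (hcutfin F hFfin q)
        (measure_mono (inter_subset_inter_right _ (Iio_subset_Iio hpq)))
    have hmG_meas : Measurable mG := by
      apply Monotone.measurable
      intro p q hpq
      exact ENNReal.toReal_mono (hcutfin G hGfin q)
        (measure_mono (inter_subset_inter_right _ (Iio_subset_Iio hpq)))
    have hw_meas : Measurable w :=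
      (measurable_const.mul hmF_meas).sub (measurable_const.mul hmG_meas)
    have hw_abs : ∀ t, |w t| ≤ a*α*MF + a*β*MG := by
      intro t
      have hb1 : a*α*mF t ≤ a*α*MF :=
        mul_le_mul_of_nonneg_left (hmF_le t) (by positivity)
      have hb2 : a*β*mG t ≤ a*β*MG :=
        mul_le_mul_of_nonneg_left (hmG_le t) (by positivity)
      have hb3 : 0 ≤ a*α*mF t := mul_nonneg (by positivity) (hmF_nonneg t)
      have hb4 : 0 ≤ a*β*mG t := mul_nonneg (by positivity) (hmG_nonneg t)
      have hb5 : 0 ≤ a*α*MF := by positivity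
      have hb6 : 0 ≤ a*β*MG := by positivity
      rw [hw, abs_le]
      constructor
      · simp only
        linarith
      · simp only
        linarith
    -- integral of g
    have hgI : ∀ t, t0 ≤ t → ∫ s in t0..t, g s = β * mG t - α * mF t := by
      intro t ht
      rw [intervalIntegral.integral_of_le ht]
      have hsplit : ∫ s in Ioc t0 t, g s
          = (∫ s in Ioc t0 t, β * G.indicator (fun _ => (1:ℝ)) s)
            - ∫ s in Ioc t0 t, α * F.indicator (fun _ => (1:ℝ)) s := by
        rw [← integral_sub (aux_ind_integrable β G hGm hGfin _)
          (aux_ind_integrable α F hFm' hFfin _)]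
      rw [hsplit, aux_ind_int β G (Ioc t0 t) hGm, aux_ind_int α F (Ioc t0 t) hFm']
      have hGi : G ∩ Ioc t0 t = G ∩ Iic t := by
        ext x
        simp only [mem_inter_iff, mem_Ioc, mem_Iic]
        constructor
        · rintro ⟨hxG, _, hx2⟩; exact ⟨hxG, hx2⟩
        · rintro ⟨hxG, hx2⟩
          exact ⟨hxG, lt_of_le_of_lt (h1.trans hτ1s1.le) ((hs1sm.trans (hGsub hxG).1)), hx2⟩
      have hFi : F ∩ Ioc t0 t = F ∩ Iic t := by
        ext x
        simp only [mem_inter_iff, mem_Ioc, mem_Iic]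
        constructor
        · rintro ⟨hxF, _, hx2⟩; exact ⟨hxF, hx2⟩
        · rintro ⟨hxF, hx2⟩
          exact ⟨hxF, lt_of_le_of_lt (h1.trans hτ1s1.le) (hFsub hxF).1, hx2⟩
      rw [hGi, hFi, aux_vol_Iic, aux_vol_Iic]
    -- y = xb + w on [t0,T]
    have hyw : ∀ t ∈ Icc t0 T, y t = xb t + w t := by
      intro t ht
      have h3 : ∫ s in t0..t, -(a * v s)
          = (∫ s in t0..t, -(a * ub s)) + ∫ s in t0..t, -(a * g s) := by
        have hIIag : IntervalIntegrable (fun s => -(a * g s)) volume t0 t :=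
          aux_ii (((measurable_const.mul hgm).neg).aestronglyMeasurable.restrict)
            (C := a*(α+β)) (fun s => by
              rw [abs_neg, abs_mul, abs_of_nonneg ha.le]
              exact mul_le_mul_of_nonneg_left (hgabs' s) ha.le)
        rw [← intervalIntegral.integral_add (hfint' t0 t ht0m ht) hIIag]
        apply intervalIntegral.integral_congr_ae
        filter_upwards [hUaeI' t0 t ht0m ht] with s hs hmem
        have : v s = U s + g s := rfl
        rw [this, hs hmem]
        ring
      have h4 : ∫ s in t0..t, -(a * g s) = -(a * (β * mG t - α * mF t)) := by
        rw [intervalIntegral.integral_neg, intervalIntegral.integral_const_mul, hgI t ht.1]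
      rw [hy]
      simp only
      rw [h3, h4, hxeq t ht, hw]
      simp only
      ring
    -- sign properties of w
    have hw0 : ∀ t, 0 ≤ w t := by
      intro t
      rcases le_or_gt t sm with h' | h'
      · rw [hw]
        simp only
        rw [hmG_zero t h']
        have := mul_nonneg (mul_nonneg ha.le hαpos.le) (hmF_nonneg t)
        linarith
      · rw [hw]
        simp only
        rw [hmF_full t h'.le]
        have hb2 : a*β*mG t ≤ a*β*MG :=
          mul_le_mul_of_nonneg_left (hmG_le t) (by positivity)
        have hb3 : a*β*MG = a*α*MF := by rw [mul_assoc, hbal, mul_assoc]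
        linarith
    have hwle : ∀ t, w t ≤ a*α*MF := by
      intro t
      rw [hw]
      simp only
      have hb1 : a*α*mF t ≤ a*α*MF :=
        mul_le_mul_of_nonneg_left (hmF_le t) (by positivity)
      have hb4 : 0 ≤ a*β*mG t := mul_nonneg (by positivity) (hmG_nonneg t)
      linarith
    have hwz1 : ∀ t, t ≤ s1 → w t = 0 := by
      intro t ht
      rw [hw]
      simp only
      rw [hmF_zero t ht, hmG_zero t (ht.trans hs1sm.le)]
      ring
    have hwz2 : ∀ t, τ2 ≤ t → w t = 0 := by
      intro t ht
      rw [hw]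
      simp only
      rw [hmF_full t ((hsm2.le.trans ht)), hmG_full t ht]
      have hb3 : a*β*MG = a*α*MF := by rw [mul_assoc, hbal, mul_assoc]
      linarith
    -- feasibility of (y, v)
    have hyfeas : FP3Feasible a t0 T x0 y v := by
      refine ⟨hvm.aestronglyMeasurable.restrict, ?_, fun t _ => rfl, ?_⟩
      · filter_upwards with t using hvmem t
      · intro t ht
        rw [hyw t ht]
        constructor
        · linarith [(hxbd t ht).1, hw0 t]
        · rcases le_or_gt t s1 with h' | h'
          · rw [hwz1 t h']
            linarith [(hxbd t ht).2]
          · rcases le_or_gt t τ2 with h'' | h''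
            · have hts : t ∈ Icc s1 τ2 := ⟨h'.le, h''⟩
              have hη1 := hηle t hts
              have hη2 := hwle t
              linarith [hηb]
            · rw [hwz2 t h''.le]
              linarith [(hxbd t ht).2]
    -- the W11 distance is at most δ
    have hdist : (∫ t in t0..T, |(-(a * v t)) - (-(a * ub t))|) ≤ δ := by
      have hstep1 : ∫ t in t0..T, |(-(a * v t)) - (-(a * ub t))|
          = ∫ t in t0..T, a * |g t| := by
        apply intervalIntegral.integral_congr_ae
        filter_upwards [hUaeI' t0 T ht0m ⟨htT.le, le_refl T⟩] with t htu hmem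
        have hveq : v t = ub t + g t := by
          have : v t = U t + g t := rfl
          rw [this, htu hmem]
        rw [hveq]
        rw [show -(a * (ub t + g t)) - -(a * ub t) = -(a * g t) by ring, abs_neg, abs_mul,
          abs_of_nonneg ha.le]
      rw [hstep1]
      have hstep2 : ∫ t in t0..T, a * |g t|
          ≤ ∫ t in t0..T, a * (α * F.indicator (fun _ => (1:ℝ)) t
              + β * G.indicator (fun _ => (1:ℝ)) t) := by
        apply intervalIntegral.integral_mono_on htT.le
        · exact aux_ii ((measurable_const.mul hgm.abs).aestronglyMeasurable.restrict)
            (C := a * (α + β)) (fun t => by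
              rw [abs_mul, abs_of_nonneg ha.le, abs_abs]
              exact mul_le_mul_of_nonneg_left (hgabs' t) ha.le)
        · rw [intervalIntegrable_iff]
          apply Integrable.const_mul
          exact ((aux_ind_integrable α F hFm' hFfin _).add (aux_ind_integrable β G hGm hGfin _))
        · intro x _
          exact mul_le_mul_of_nonneg_left (hgabs x) ha.le
      have hstep3 : ∫ t in t0..T, a * (α * F.indicator (fun _ => (1:ℝ)) t
          + β * G.indicator (fun _ => (1:ℝ)) t) = a * (α * MF + β * MG) := by
        rw [intervalIntegral.integral_const_mul]
        have : ∫ t in t0..T, (α * F.indicator (fun _ => (1:ℝ)) t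
            + β * G.indicator (fun _ => (1:ℝ)) t)
            = α * (volume (F ∩ Ioc t0 T)).toReal + β * (volume (G ∩ Ioc t0 T)).toReal := by
          rw [intervalIntegral.integral_of_le htT.le,
            ← aux_ind_int α F (Ioc t0 T) hFm', ← aux_ind_int β G (Ioc t0 T) hGm]
          exact integral_add (aux_ind_integrable α F hFm' hFfin _)
            (aux_ind_integrable β G hGm hGfin _)
        rw [this]
        have hFi : F ∩ Ioc t0 T = F := inter_eq_left.mpr (fun x hx =>
          ⟨lt_of_le_of_lt (h1.trans hτ1s1.le) (hFsub hx).1,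
            ((hFsub hx).2.trans hsm2).le.trans h2⟩)
        have hGi : G ∩ Ioc t0 T = G := inter_eq_left.mpr (fun x hx =>
          ⟨lt_of_le_of_lt (h1.trans hτ1s1.le) (hs1sm.trans (hGsub hx).1),
            (hGsub hx).2.le.trans h2⟩)
        rw [hFi, hGi]
      calc ∫ t in t0..T, a * |g t|
          ≤ a * (α * MF + β * MG) := by rw [← hstep3]; exact hstep2
        _ = 2*a*α*MF := by rw [hbal]; ring
        _ ≤ δ := hδb
    -- integrability helpers for the cost integrals
    have hTm : T ∈ Icc t0 T := ⟨htT.le, le_rfl⟩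
    have hexpcont : Continuous (fun t : ℝ => Real.exp (-(lam * t))) :=
      Real.continuous_exp.comp ((continuous_const.mul continuous_id).neg)
    have hexp_le : ∀ p q : ℝ, p ∈ Icc t0 T → q ∈ Icc t0 T → ∀ t ∈ Ι p q,
        Real.exp (-(lam * t)) ≤ Real.exp (-(lam * t0)) := by
      intro p q hp hq t ht
      have h := (hsubI p q hp hq ht).1
      exact Real.exp_le_exp.mpr (neg_le_neg (mul_le_mul_of_nonneg_left h hlam.le))
    have hIIem' : ∀ (m : ℝ → ℝ) (M : ℝ), Measurable m → (∀ t, |m t| ≤ M) →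
        ∀ p q : ℝ, p ∈ Icc t0 T → q ∈ Icc t0 T →
        IntervalIntegrable (fun t => Real.exp (-(lam*t)) * m t) volume p q := by
      intro m M hm hM p q hp hq
      apply aux_ii' (C := Real.exp (-(lam*t0)) * M)
      · exact (hexpcont.aestronglyMeasurable.restrict).mul (hm.aestronglyMeasurable.restrict)
      · filter_upwards [ae_restrict_mem measurableSet_uIoc] with t ht
        rw [abs_mul, abs_of_nonneg (Real.exp_nonneg _)]
        exact mul_le_mul (hexp_le p q hp hq t ht) (hM t) (abs_nonneg _) (Real.exp_nonneg _)
    have hIIxu : ∀ p q : ℝ, p ∈ Icc t0 T → q ∈ Icc t0 T →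
        IntervalIntegrable (fun t => -(Real.exp (-(lam*t)) * (xb t + ub t))) volume p q := by
      intro p q hp hq
      apply aux_ii' (C := Real.exp (-(lam*t0)) * 2)
      · exact (((hexpcont.aestronglyMeasurable.restrict).mul
          (((hcont.aestronglyMeasurable measurableSet_Icc).mono_measure
            (Measure.restrict_mono (hsubI p q hp hq) le_rfl)).add
           (humeas.mono_measure (Measure.restrict_mono (hsubI p q hp hq) le_rfl)))).neg)
      · filter_upwards [ae_restrict_mem measurableSet_uIoc,
          ae_restrict_of_ae_restrict_of_subset (hsubI p q hp hq) hubd] with t ht hu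
        have htI := hsubI p q hp hq ht
        rw [abs_neg, abs_mul, abs_of_nonneg (Real.exp_nonneg _)]
        have hxab : |xb t| ≤ 1 := abs_le.mpr ⟨(hxbd t htI).1, (hxbd t htI).2⟩
        have huab : |ub t| ≤ 1 := abs_le.mpr ⟨hu.1, hu.2⟩
        have h1' : |xb t + ub t| ≤ 2 := (abs_add_le _ _).trans (by linarith)
        exact mul_le_mul (hexp_le p q hp hq t ht) h1' (abs_nonneg _) (Real.exp_nonneg _)
    have hIIyv : ∀ p q : ℝ, p ∈ Icc t0 T → q ∈ Icc t0 T →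
        IntervalIntegrable (fun t => -(Real.exp (-(lam*t)) * (y t + v t))) volume p q := by
      intro p q hp hq
      apply aux_ii' (C := Real.exp (-(lam*t0)) * 2)
      · have hyaesm : AEStronglyMeasurable y (volume.restrict (Ι p q)) := by
          apply AEStronglyMeasurable.congr (f := fun t => xb t + w t)
          · exact ((hcont.aestronglyMeasurable measurableSet_Icc).mono_measure
              (Measure.restrict_mono (hsubI p q hp hq) le_rfl)).add
              (hw_meas.aestronglyMeasurable.restrict)
          · filter_upwards [ae_restrict_mem measurableSet_uIoc] with t ht
            exact (hyw t (hsubI p q hp hq ht)).symm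
        exact ((hexpcont.aestronglyMeasurable.restrict).mul
          (hyaesm.add (hvm.aestronglyMeasurable.restrict))).neg
      · filter_upwards [ae_restrict_mem measurableSet_uIoc] with t ht
        have htI := hsubI p q hp hq ht
        rw [abs_neg, abs_mul, abs_of_nonneg (Real.exp_nonneg _)]
        have hy' := hyfeas.2.2.2 t htI
        have hyab : |y t| ≤ 1 := abs_le.mpr ⟨hy'.1, hy'.2⟩
        have h1' : |y t + v t| ≤ 2 := (abs_add_le _ _).trans (by linarith [hvb t])
        exact mul_le_mul (hexp_le p q hp hq t ht) h1' (abs_nonneg _) (Real.exp_nonneg _)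
    have hIIwg : ∀ p q : ℝ, p ∈ Icc t0 T → q ∈ Icc t0 T →
        IntervalIntegrable (fun t => Real.exp (-(lam*t)) * (w t + g t)) volume p q := by
      intro p q hp hq
      refine hIIem' (fun t => w t + g t) (a*α*MF + a*β*MG + (α+β))
        (hw_meas.add hgm) (fun t => ?_) p q hp hq
      have := hw_abs t
      have := hgabs' t
      have := abs_add_le (w t) (g t)
      linarith
    -- the cost difference
    have hD1 : FP3Cost lam t0 T xb ub - FP3Cost lam t0 T y v
        = ∫ t in t0..T, (-(Real.exp (-(lam*t)) * (xb t + ub t))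
            - (-(Real.exp (-(lam*t)) * (y t + v t)))) := by
      simp only [FP3Cost]
      exact (intervalIntegral.integral_sub (hIIxu t0 T ht0m hTm) (hIIyv t0 T ht0m hTm)).symm
    have hD2 : ∫ t in t0..T, (-(Real.exp (-(lam*t)) * (xb t + ub t))
            - (-(Real.exp (-(lam*t)) * (y t + v t))))
        = ∫ t in t0..T, Real.exp (-(lam*t)) * (w t + g t) := by
      apply intervalIntegral.integral_congr_ae
      filter_upwards [hUaeI' t0 T ht0m hTm] with t htu hmem
      have htI := hsubI t0 T ht0m hTm hmem
      rw [hyw t htI]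
      have hveq : v t = ub t + g t := by
        have hvv : v t = U t + g t := rfl
        rw [hvv, htu hmem]
      rw [hveq]
      ring
    have hgzero : ∀ t, t ≤ τ1 ∨ τ2 ≤ t → g t = 0 := by
      intro t ht
      refine hg0 t (fun hF' => ?_) (fun hG' => ?_)
      · have h5 := (hFsub hF').1
        have h6 := (hFsub hF').2
        rcases ht with h' | h' <;> linarith [hτ1s1, hs1sm, hsm2]
      · have h5 := (hGsub hG').1
        have h6 := (hGsub hG').2
        rcases ht with h' | h' <;> linarith [hτ1s1, hs1sm]
    have hzero1 : ∫ t in t0..τ1, Real.exp (-(lam*t)) * (w t + g t) = 0 := by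
      have heq : EqOn (fun t => Real.exp (-(lam*t)) * (w t + g t)) 0 (uIcc t0 τ1) := by
        intro t ht
        rw [uIcc_of_le h1] at ht
        have h5 := hwz1 t (ht.2.trans hτ1s1.le)
        have h6 := hgzero t (Or.inl ht.2)
        simp only [Pi.zero_apply]
        rw [h5, h6]
        ring
      rw [intervalIntegral.integral_congr heq]
      simp
    have hzero2 : ∫ t in τ2..T, Real.exp (-(lam*t)) * (w t + g t) = 0 := by
      have heq : EqOn (fun t => Real.exp (-(lam*t)) * (w t + g t)) 0 (uIcc τ2 T) := by
        intro t ht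
        rw [uIcc_of_le h2] at ht
        have h5 := hwz2 t ht.1
        have h6 := hgzero t (Or.inr ht.1)
        simp only [Pi.zero_apply]
        rw [h5, h6]
        ring
      rw [intervalIntegral.integral_congr heq]
      simp
    have hchop : ∫ t in t0..T, Real.exp (-(lam*t)) * (w t + g t)
        = ∫ t in τ1..τ2, Real.exp (-(lam*t)) * (w t + g t) := by
      rw [← intervalIntegral.integral_add_adjacent_intervals
        (hIIwg t0 τ1 ht0m hτ1m) (hIIwg τ1 T hτ1m hTm),
        ← intervalIntegral.integral_add_adjacent_intervals
        (hIIwg τ1 τ2 hτ1m hτ2m) (hIIwg τ2 T hτ2m hTm), hzero1, hzero2]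
      ring
    -- evaluating the two parts
    have hEIoc : IntegrableOn (fun s => Real.exp (-(lam * s))) (Ioc τ1 τ2) volume :=
      (hexpcont.intervalIntegrable τ1 τ2).1
    have hPint : IntegrableOn (fun s => Real.exp (-(lam * s))) F volume :=
      hEIoc.mono_set (hFsub2.trans Ioo_subset_Ioc_self)
    have hQint : IntegrableOn (fun s => Real.exp (-(lam * s))) G volume :=
      hEIoc.mono_set (hGsub2.trans Ioo_subset_Ioc_self)
    set P := ∫ s in F, Real.exp (-(lam * s)) with hP
    set Q := ∫ s in G, Real.exp (-(lam * s)) with hQ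
    have hkeyF : ∫ t in τ1..τ2, Real.exp (-(lam * t)) * mF t
        = (P - Real.exp (-(lam*τ2)) * MF)/lam := by
      have h5 : ∫ t in τ1..τ2, Real.exp (-(lam * t)) * mF t
          = ∫ s in F, (Real.exp (-(lam * s)) - Real.exp (-(lam * τ2))) / lam := by
        simp only [hmF]
        exact aux_key lam τ1 τ2 hlam h12 F hFm' hFsub2
      rw [h5, integral_div,
        integral_sub hPint (integrableOn_const hFfin),
        setIntegral_const, measureReal_def, smul_eq_mul, ← hP, ← hMF]
      ring
    have hkeyG : ∫ t in τ1..τ2, Real.exp (-(lam * t)) * mG t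
        = (Q - Real.exp (-(lam*τ2)) * MG)/lam := by
      have h5 : ∫ t in τ1..τ2, Real.exp (-(lam * t)) * mG t
          = ∫ s in G, (Real.exp (-(lam * s)) - Real.exp (-(lam * τ2))) / lam := by
        simp only [hmG]
        exact aux_key lam τ1 τ2 hlam h12 G hGm hGsub2
      rw [h5, integral_div,
        integral_sub hQint (integrableOn_const hGfin),
        setIntegral_const, measureReal_def, smul_eq_mul, ← hQ, ← hMG]
      ring
    have hwpart : ∫ t in τ1..τ2, Real.exp (-(lam*t)) * w t
        = a*α*((P - Real.exp (-(lam*τ2)) * MF)/lam)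
          - a*β*((Q - Real.exp (-(lam*τ2)) * MG)/lam) := by
      have hsplit : (fun t => Real.exp (-(lam*t)) * w t)
          = fun t => (a*α)*(Real.exp (-(lam*t)) * mF t)
              - (a*β)*(Real.exp (-(lam*t)) * mG t) := by
        funext t
        rw [hw]
        simp only
        ring
      rw [hsplit, intervalIntegral.integral_sub
        ((hIIem' mF MF hmF_meas (fun t => by
          rw [abs_of_nonneg (hmF_nonneg t)]; exact hmF_le t) τ1 τ2 hτ1m hτ2m).const_mul (a*α))
        ((hIIem' mG MG hmG_meas (fun t => by
          rw [abs_of_nonneg (hmG_nonneg t)]; exact hmG_le t) τ1 τ2 hτ1m hτ2m).const_mul (a*β)),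
        intervalIntegral.integral_const_mul, intervalIntegral.integral_const_mul,
        hkeyF, hkeyG]
    have hindint : ∀ (A : Set ℝ), MeasurableSet A → A ⊆ Ioo τ1 τ2 →
        ∫ t in τ1..τ2, Real.exp (-(lam*t)) * A.indicator (fun _ => (1:ℝ)) t
          = ∫ s in A, Real.exp (-(lam * s)) := by
      intro A hAm hAsub
      rw [intervalIntegral.integral_of_le h12.le]
      have h5 : (fun t => Real.exp (-(lam*t)) * A.indicator (fun _ => (1:ℝ)) t)
          = A.indicator (fun t => Real.exp (-(lam*t))) := by
        funext t
        by_cases ht : t ∈ A <;> simp [ht]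
      rw [h5, setIntegral_indicator hAm,
        inter_eq_right.mpr (hAsub.trans Ioo_subset_Ioc_self)]
    have hgpart : ∫ t in τ1..τ2, Real.exp (-(lam*t)) * g t = β * Q - α * P := by
      have hsplit : (fun t => Real.exp (-(lam*t)) * g t)
          = fun t => β * (Real.exp (-(lam*t)) * G.indicator (fun _ => (1:ℝ)) t)
              - α * (Real.exp (-(lam*t)) * F.indicator (fun _ => (1:ℝ)) t) := by
        funext t
        rw [hg]
        simp only
        ring
      have hbF : ∀ t, |F.indicator (fun _ => (1:ℝ)) t| ≤ 1 := by
        intro t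
        by_cases ht : t ∈ F <;> simp [ht]
      have hbG : ∀ t, |G.indicator (fun _ => (1:ℝ)) t| ≤ 1 := by
        intro t
        by_cases ht : t ∈ G <;> simp [ht]
      rw [hsplit, intervalIntegral.integral_sub
        ((hIIem' (G.indicator (fun _ => (1:ℝ))) 1 (measurable_const.indicator hGm) hbG
          τ1 τ2 hτ1m hτ2m).const_mul β)
        ((hIIem' (F.indicator (fun _ => (1:ℝ))) 1 (measurable_const.indicator hFm') hbF
          τ1 τ2 hτ1m hτ2m).const_mul α),
        intervalIntegral.integral_const_mul, intervalIntegral.integral_const_mul,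
        hindint G hGm hGsub2, hindint F hFm' hFsub2, ← hP, ← hQ]
    -- strict positivity of the gain
    have hPge : Real.exp (-(lam*sm)) * MF ≤ P := by
      have h5 : ∫ s in F, Real.exp (-(lam*sm)) ≤ ∫ s in F, Real.exp (-(lam*s)) := by
        apply setIntegral_mono_on (integrableOn_const hFfin) hPint hFm'
        intro s hs
        exact Real.exp_le_exp.mpr
          (neg_le_neg (mul_le_mul_of_nonneg_left (hFsub hs).2.le hlam.le))
      rw [setIntegral_const, measureReal_def, smul_eq_mul] at h5
      rw [← hMF, ← hP] at h5
      linarith [h5]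
    have hQlt : Q < Real.exp (-(lam*sm)) * MG := by
      have h0 : 0 < ∫ s in G, (Real.exp (-(lam*sm)) - Real.exp (-(lam*s))) := by
        rw [setIntegral_pos_iff_support_of_nonneg_ae]
        · have hsup : G ⊆ Function.support
              (fun s => Real.exp (-(lam*sm)) - Real.exp (-(lam*s))) := by
            intro s hs
            have h6 : Real.exp (-(lam*s)) < Real.exp (-(lam*sm)) :=
              Real.exp_lt_exp.mpr (neg_lt_neg ((mul_lt_mul_iff_right₀ hlam).mpr (hGsub hs).1))
            simp only [Function.mem_support]
            exact sub_ne_zero.mpr (ne_of_gt h6)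
          calc (0:ℝ≥0∞) < volume G := zero_lt_iff.mpr hGpos
            _ ≤ volume (Function.support
                (fun s => Real.exp (-(lam*sm)) - Real.exp (-(lam*s))) ∩ G) :=
              measure_mono (subset_inter hsup Subset.rfl)
        · filter_upwards [ae_restrict_mem hGm] with s hs
          have h6 : Real.exp (-(lam*s)) ≤ Real.exp (-(lam*sm)) :=
            Real.exp_le_exp.mpr (neg_le_neg (mul_le_mul_of_nonneg_left (hGsub hs).1.le hlam.le))
          simp only [Pi.zero_apply]
          linarith
        · exact (integrableOn_const hGfin).sub hQint
      have h1' : ∫ s in G, (Real.exp (-(lam*sm)) - Real.exp (-(lam*s)))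
          = Real.exp (-(lam*sm)) * MG - Q := by
        rw [integral_sub (integrableOn_const (C := Real.exp (-(lam*sm))) hGfin) hQint,
          setIntegral_const, measureReal_def, smul_eq_mul]
        rw [← hMG, ← hQ]
        ring
      rw [h1'] at h0
      linarith
    have hPQ : 0 < α * P - β * Q := by
      have hc1 : β * Q < β * (Real.exp (-(lam*sm)) * MG) := by
        exact mul_lt_mul_of_pos_left hQlt hβpos
      have hc2 : α * (Real.exp (-(lam*sm)) * MF) ≤ α * P :=
        mul_le_mul_of_nonneg_left hPge hαpos.le
      have hc3 : β * (Real.exp (-(lam*sm)) * MG) = α * (Real.exp (-(lam*sm)) * MF) := by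
        calc β * (Real.exp (-(lam*sm)) * MG) = Real.exp (-(lam*sm)) * (β * MG) := by ring
          _ = Real.exp (-(lam*sm)) * (α * MF) := by rw [hbal]
          _ = α * (Real.exp (-(lam*sm)) * MF) := by ring
      linarith
    have hIIew : IntervalIntegrable (fun t => Real.exp (-(lam*t)) * w t) volume τ1 τ2 :=
      hIIem' w (a*α*MF + a*β*MG) hw_meas hw_abs τ1 τ2 hτ1m hτ2m
    have hIIeg : IntervalIntegrable (fun t => Real.exp (-(lam*t)) * g t) volume τ1 τ2 :=
      hIIem' g (α+β) hgm hgabs' τ1 τ2 hτ1m hτ2m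
    have hDpos : 0 < FP3Cost lam t0 T xb ub - FP3Cost lam t0 T y v := by
      rw [hD1, hD2, hchop]
      have hsum : (fun t => Real.exp (-(lam*t)) * (w t + g t))
          = fun t => Real.exp (-(lam*t)) * w t + Real.exp (-(lam*t)) * g t := by
        funext t
        ring
      rw [hsum, intervalIntegral.integral_add hIIew hIIeg, hwpart, hgpart]
      have hfinal : a*α*((P - Real.exp (-(lam*τ2)) * MF)/lam)
            - a*β*((Q - Real.exp (-(lam*τ2)) * MG)/lam) + (β*Q - α*P)
          = (a/lam - 1)*(α*P - β*Q) := by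
        have hlam' : lam ≠ 0 := ne_of_gt hlam
        field_simp
        linear_combination (a * Real.exp (-(lam*τ2))) * hbal
      have hgt1 : (1:ℝ) < a/lam := (one_lt_div hlam).mpr hal
      have hmp := mul_pos (by linarith only [hgt1] : (0:ℝ) < a/lam - 1) hPQ
      linarith only [hmp, hfinal]
    have hle := hopt y v hyfeas hdist
    linarith only [hDpos, hle]
  -- conclusion from U = 1 a.e. on (τ1, τ2)
  have hline : ∀ t ∈ Icc τ1 τ2, xb t = 1 - a * (t - τ1) := by
    intro t ht
    have htm : t ∈ Icc t0 T := ⟨h1.trans ht.1, ht.2.trans h2⟩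
    have hi := hinc τ1 hτ1m t htm
    have hint1 : ∫ s in τ1..t, U s = t - τ1 := by
      have hcongr : ∫ s in τ1..t, U s = ∫ s in τ1..t, (1:ℝ) := by
        apply intervalIntegral.integral_congr_ae
        apply ae_iff.mpr
        refine measure_mono_null (t := ({s | U s < 1} ∩ Ioo τ1 τ2) ∪ {τ2}) ?_ ?_
        · intro s hs
          simp only [mem_setOf_eq] at hs
          push_neg at hs
          obtain ⟨hsI, hsU⟩ := hs
          rw [uIoc_of_le ht.1] at hsI
          have hUlt : U s < 1 := lt_of_le_of_ne (hU1 s).2 hsU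
          rcases lt_or_eq_of_le (hsI.2.trans ht.2) with h' | h'
          · exact Or.inl ⟨hUlt, hsI.1, h'⟩
          · exact Or.inr (by simp [h'])
        · exact measure_union_null hU1ae (measure_singleton τ2)
      rw [hcongr]
      simp
    rw [ha1, hint1] at hi
    linear_combination hi
  have hlen : τ2 - τ1 = 2/a := by
    have h5 := hline τ2 ⟨h12.le, le_refl τ2⟩
    rw [ha2] at h5
    rw [eq_div_iff (ne_of_gt ha)]
    linear_combination h5
  exact ⟨hlen, hline⟩
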